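/- arXiv:2312.10377 — 2 statements merged into one kernel-verified Lean document; each statement's English description precedes it below -/
import Mathlib

section
/- For every n ≥ 2, the graph S_0(n,2) (the simplified de Bruijn graph over the binary alphabet) is properly 3-colorable, i.e., its chromatic number is at most 3. -/
/-- `A^n_m(k)`: words of length `n` over `{0,...,k-1}` with consecutive letters differing by at least `m`. -/
def AWord (m n k : ℕ) (x : List ℕ) : Prop :=
  x.length = n ∧ (∀ a ∈ x, a < k) ∧
    ∀ i, i + 1 < n → m ≤ Nat.dist (x.getD i 0) (x.getD (i+1) 0)

/-- de Bruijn-style adjacency: the suffix of one word equals the prefix of the other. -/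
def dbAdj (u v : List ℕ) : Prop := u.tail = v.dropLast ∨ v.tail = u.dropLast

/-- The simplified de Bruijn-type graph `S_m(n,k)`. -/
def S (m n k : ℕ) : SimpleGraph {x : List ℕ // AWord m n k x} where
  Adj u v := u ≠ v ∧ dbAdj u.1 v.1
  symm := by constructor; intro u v h; exact ⟨h.1.symm, Or.symm h.2⟩
  loopless := by constructor; intro u h; exact h.1 rfl

/-- length of the first run of a word -/
def fr : List ℕ → ℕ
  | [] => 0
  | a :: l => (l.takeWhile (· == a)).length + 1

/-- the 3-coloring: 2 if the first run has even length, else the first letter. -/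
def col (x : List ℕ) : Fin 3 :=
  if fr x % 2 = 0 then 2 else if x.headD 0 = 0 then 0 else 1

lemma tw_append_exists (a b : ℕ) (t : List ℕ) (h : ∃ x ∈ t, x ≠ a) :
    (t ++ [b]).takeWhile (· == a) = t.takeWhile (· == a) := by
  induction t with
  | nil => obtain ⟨x, hx, _⟩ := h; simp at hx
  | cons c t ih =>
    by_cases hc : c = a
    · subst hc
      obtain ⟨x, hx, hxa⟩ := h
      simp at hx
      rcases hx with h1 | h1
      · exact absurd h1 hxa
      · simp [List.takeWhile_cons, ih ⟨x, h1, hxa⟩]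
    · simp [List.takeWhile_cons, hc]

lemma tw_append_all (a b : ℕ) (t : List ℕ) (h : ∀ x ∈ t, x = a) (hb : b ≠ a) :
    (t ++ [b]).takeWhile (· == a) = t := by
  induction t with
  | nil => simp [List.takeWhile_cons, hb]
  | cons c t ih =>
    have hc : c = a := h c (by simp)
    simp [List.takeWhile_cons, hc, ih (fun x hx => h x (by simp [hx]))]

lemma tw_all (a : ℕ) (t : List ℕ) (h : ∀ x ∈ t, x = a) :
    t.takeWhile (· == a) = t := by
  induction t with
  | nil => rfl
  | cons c t ih =>
    have hc : c = a := h c (by simp)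
    simp [List.takeWhile_cons, hc, ih (fun x hx => h x (by simp [hx]))]

lemma all_eq_rep (a : ℕ) (t : List ℕ) (h : ∀ x ∈ t, x = a) :
    a :: t = t ++ [a] := by
  induction t with
  | nil => rfl
  | cons c t ih =>
    have hc : c = a := h c (by simp)
    subst hc
    simpa using ih (fun x hx => h x (by simp [hx]))

lemma col_ne_parity (x y : List ℕ) (h : fr x % 2 ≠ fr y % 2) : col x ≠ col y := by
  unfold col
  rcases eq_or_ne (fr x % 2) 0 with h0 | h0
  · have h1 : fr y % 2 ≠ 0 := by omega
    rw [if_pos h0, if_neg h1]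
    split <;> decide
  · have h1 : fr y % 2 = 0 := by omega
    rw [if_neg h0, if_pos h1]
    split <;> decide

lemma main_lemma (a b : ℕ) (w : List ℕ) (hw : w ≠ []) (ha : a < 2)
    (hwl : ∀ x ∈ w, x < 2) (hne : a :: w ≠ w ++ [b]) :
    col (a :: w) ≠ col (w ++ [b]) := by
  obtain ⟨c, t, rfl⟩ := List.exists_cons_of_ne_nil hw
  have hc : c < 2 := hwl c (by simp)
  by_cases hca : c = a
  · rw [hca] at hne ⊢
    apply col_ne_parity
    have h1 : fr (a :: a :: t) = fr (a :: t) + 1 := by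
      simp [fr, List.takeWhile_cons]
    by_cases hall : ∀ x ∈ t, x = a
    · by_cases hba : b = a
      · exfalso
        apply hne
        have h3 := all_eq_rep a t hall
        rw [hba]
        simp only [List.cons_append]
        rw [← h3]
      · have e1 : fr ((a :: t) ++ [b]) = t.length + 1 := by
          simp only [List.cons_append, fr]
          rw [tw_append_all a b t hall hba]
        have e2 : fr (a :: t) = t.length + 1 := by
          simp only [fr]
          rw [tw_all a t hall]
        rw [e1, h1, e2]
        omega
    · push_neg at hall
      have e1 : fr ((a :: t) ++ [b]) = fr (a :: t) := by
        simp only [List.cons_append, fr]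
        rw [tw_append_exists a b t (by tauto)]
      rw [e1, h1]
      omega
  · -- heads differ; left color is the letter a, right is 2 or the letter c
    have hhl : (a :: (c :: t)).headD 0 = a := rfl
    have hhr : ((c :: t) ++ [b]).headD 0 = c := rfl
    have hfl : fr (a :: c :: t) = 1 := by
      have : (c == a) = false := by simp [hca]
      simp [fr, List.takeWhile_cons, this]
    unfold col
    rw [hfl, hhl, hhr]
    interval_cases a <;> interval_cases c <;> simp_all <;> split <;> simp_all

theorem stmt2 (n : ℕ) (hn : 2 ≤ n) : (S 0 n 2).Colorable 3 := by
  refine ⟨SimpleGraph.Coloring.mk (fun u => col u.1) ?_⟩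
  rintro u v ⟨hne, hadj⟩
  have hune : u.1 ≠ v.1 := fun h => hne (Subtype.ext h)
  obtain ⟨hul, hub, -⟩ := u.2
  obtain ⟨hvl, hvb, -⟩ := v.2
  have hu0 : u.1 ≠ [] := by intro h; rw [h] at hul; simp at hul; omega
  have hv0 : v.1 ≠ [] := by intro h; rw [h] at hvl; simp at hvl; omega
  rcases hadj with h | h
  · -- u.tail = v.dropLast : v = (u.tail) ++ [last v], u = head :: u.tail
    have hu : u.1 = u.1.head hu0 :: u.1.tail := (List.cons_head_tail hu0).symm
    have hv : v.1 = v.1.dropLast ++ [v.1.getLast hv0] :=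
      (List.dropLast_append_getLast hv0).symm
    have hwne : u.1.tail ≠ [] := by
      intro hh
      have := congrArg List.length hu
      rw [hh] at this
      simp at this
      omega
    have key := main_lemma (u.1.head hu0) (v.1.getLast hv0) u.1.tail hwne
      (hub _ (List.head_mem hu0)) (fun x hx => hub x (List.mem_of_mem_tail hx))
      (by rw [← hu, h, ← hv]; exact hune)
    rw [← hu, h, ← hv] at key
    exact key
  · have hu : v.1 = v.1.head hv0 :: v.1.tail := (List.cons_head_tail hv0).symm
    have hv : u.1 = u.1.dropLast ++ [u.1.getLast hu0] :=
      (List.dropLast_append_getLast hu0).symm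
    have hwne : v.1.tail ≠ [] := by
      intro hh
      have := congrArg List.length hu
      rw [hh] at this
      simp at this
      omega
    have key := main_lemma (v.1.head hv0) (u.1.getLast hu0) v.1.tail hwne
      (hvb _ (List.head_mem hv0)) (fun x hx => hvb x (List.mem_of_mem_tail hx))
      (by rw [← hu, h, ← hv]; exact hune.symm)
    rw [← hu, h, ← hv] at key
    exact key.symm
end

section
/- For n ≥ 3, the map τ sending a permutation x_1x_2...x_n of {1,...,n} to the binary word y_1...y_{n-1}, where y_i = 0 if x_i > x_{i+1} and y_i = 1 otherwise, is a graph homomorphism from the simplified graph of overlapping permutations SP(n) to the simplified de Bruijn graph S_0(n-1,2). -/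
/-- Arc relation of the graph of overlapping permutations `P(n)`. -/
def Parc (n : ℕ) (x y : Equiv.Perm (Fin n)) : Prop :=
  ∀ i j : Fin n, 0 < i.val → i < j →
    (x i < x j ↔ y ⟨i.val - 1, by have := i.isLt; omega⟩ < y ⟨j.val - 1, by have := j.isLt; omega⟩)

/-- The simplified graph of overlapping permutations `SP(n)`. -/
def SP (n : ℕ) : SimpleGraph (Equiv.Perm (Fin n)) where
  Adj u v := u ≠ v ∧ (Parc n u v ∨ Parc n v u)
  symm := by constructor; intro u v h; exact ⟨h.1.symm, Or.symm h.2⟩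
  loopless := by constructor; intro u h; exact h.1 rfl

/-- The descent word of a permutation: `y i = 1` iff `x i < x (i+1)`, else `0`. -/
def tauW (n : ℕ) (x : Equiv.Perm (Fin n)) : List ℕ :=
  List.ofFn (fun i : Fin (n-1) =>
    if x ⟨i.val, by have := i.isLt; omega⟩ < x ⟨i.val + 1, by have := i.isLt; omega⟩ then 1 else 0)


lemma myIteEq {P Q : Prop} [Decidable P] [Decidable Q]
    (h : (if P then (1:ℕ) else 0) = if Q then 1 else 0) : P ↔ Q := by
  split_ifs at h with h1 h2 <;> simp_all

lemma my_perm_eq_of_strictMono {n : ℕ} (u v : Equiv.Perm (Fin n))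
    (hu : StrictMono u) (hv : StrictMono v) : u = v := by
  have h := Subsingleton.elim (StrictMono.orderIsoOfSurjective u hu u.surjective)
      (StrictMono.orderIsoOfSurjective v hv v.surjective)
  ext i
  have h2 : u i = v i := congrArg (fun e : Fin n ≃o Fin n => e i) h
  exact congrArg Fin.val h2

lemma my_strictMono_of_adj {n : ℕ} (f : Equiv.Perm (Fin (n+1)))
    (h : ∀ k (hk : k + 1 < n+1), f ⟨k, by omega⟩ < f ⟨k+1, hk⟩) : StrictMono f := by
  rw [Fin.strictMono_iff_lt_succ]
  intro i
  have := h i.val (by omega)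
  exact this

lemma my_key {n : ℕ} (hn : 3 ≤ n) (u v : Equiv.Perm (Fin n))
    (h : Parc n u v) (ht : tauW n u = tauW n v) : u = v := by
  -- pointwise bit equality
  have hbit : ∀ k (hk : k + 1 < n),
      (u ⟨k, by omega⟩ < u ⟨k+1, hk⟩ ↔ v ⟨k, by omega⟩ < v ⟨k+1, hk⟩) := by
    intro k hk
    have := List.ofFn_injective ht
    have h2 := congrFun this ⟨k, by omega⟩
    exact myIteEq h2
  -- shifted equality from Parc
  have hshift : ∀ k (hk : k + 2 < n),
      (u ⟨k+1, by omega⟩ < u ⟨k+2, hk⟩ ↔ v ⟨k, by omega⟩ < v ⟨k+1, by omega⟩) := by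
    intro k hk
    have := h ⟨k+1, by omega⟩ ⟨k+2, hk⟩ (by simp) (by simp [Fin.lt_def])
    simpa using this
  -- v's descent word is constant
  have hconst : ∀ k (hk : k + 1 < n),
      (v ⟨k, by omega⟩ < v ⟨k+1, hk⟩ ↔ v ⟨0, by omega⟩ < v ⟨1, by omega⟩) := by
    intro k
    induction k with
    | zero => intro _; rfl
    | succ m ih =>
      intro hk
      have h1 := hbit (m+1) hk
      have h2 := hshift m hk
      have h3 := ih (by omega)
      rw [h1.symm, h2]; exact h3
  obtain ⟨m, rfl⟩ : ∃ m, n = m + 1 := ⟨n - 1, by omega⟩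
  by_cases hc : v ⟨0, by omega⟩ < v ⟨1, by omega⟩
  · -- both increasing
    have hvinc : ∀ k (hk : k + 1 < m+1), v ⟨k, by omega⟩ < v ⟨k+1, hk⟩ :=
      fun k hk => (hconst k hk).mpr hc
    have huinc : ∀ k (hk : k + 1 < m+1), u ⟨k, by omega⟩ < u ⟨k+1, hk⟩ :=
      fun k hk => (hbit k hk).mpr (hvinc k hk)
    exact my_perm_eq_of_strictMono u v (my_strictMono_of_adj u huinc)
      (my_strictMono_of_adj v hvinc)
  · -- both decreasing
    have hvdec : ∀ k (hk : k + 1 < m+1), v ⟨k+1, hk⟩ < v ⟨k, by omega⟩ := by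
      intro k hk
      have := (hconst k hk)
      rcases lt_trichotomy (v ⟨k+1, hk⟩) (v ⟨k, by omega⟩) with h' | h' | h'
      · exact h'
      · exact absurd (Fin.val_injective (congrArg Fin.val h'.symm)) (by
          intro hh
          have := v.injective hh
          simp [Fin.ext_iff] at this)
      · exact absurd (this.mp h') hc
    have hudec : ∀ k (hk : k + 1 < m+1), u ⟨k+1, hk⟩ < u ⟨k, by omega⟩ := by
      intro k hk
      rcases lt_trichotomy (u ⟨k+1, hk⟩) (u ⟨k, by omega⟩) with h' | h' | h'
      · exact h'
      · exact absurd (u.injective h'.symm) (by intro hh; simp [Fin.ext_iff] at hh)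
      · exact absurd ((hbit k hk).mp h') (not_lt.mpr (hvdec k hk).le)
    -- compose with rev
    have hrev : ∀ (w : Equiv.Perm (Fin (m+1))),
        (∀ k (hk : k + 1 < m+1), w ⟨k+1, hk⟩ < w ⟨k, by omega⟩) →
        StrictMono (w.trans (Fin.revPerm)) := by
      intro w hw
      apply my_strictMono_of_adj
      intro k hk
      simpa [Fin.rev_lt_rev] using hw k hk
    have := my_perm_eq_of_strictMono _ _ (hrev u hudec) (hrev v hvdec)
    ext i
    have h2 := congrArg (fun e : Equiv.Perm (Fin (m+1)) => e i) this
    simp only [Equiv.trans_apply, Fin.revPerm_apply] at h2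
    exact congrArg Fin.val (Fin.rev_injective h2)

lemma my_tauW_AWord {n : ℕ} (hn : 3 ≤ n) (x : Equiv.Perm (Fin n)) :
    AWord 0 (n-1) 2 (tauW n x) := by
  refine ⟨by simp [tauW], ?_, fun i hi => Nat.zero_le _⟩
  intro a ha
  simp only [tauW, List.mem_ofFn] at ha
  obtain ⟨i, hi⟩ := ha
  split_ifs at hi <;> omega

lemma my_dbAdj {n : ℕ} (hn : 3 ≤ n) (u v : Equiv.Perm (Fin n)) (h : Parc n u v) :
    (tauW n u).tail = (tauW n v).dropLast := by
  apply List.ext_getElem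
  · simp [tauW]
  · intro k h1 h2
    simp only [tauW, List.length_tail, List.length_ofFn] at h1
    rw [List.getElem_tail, List.getElem_dropLast]
    simp only [tauW, List.getElem_ofFn]
    have hiff := h ⟨k+1, by omega⟩ ⟨k+2, by omega⟩ (by simp) (by simp [Fin.lt_def])
    simp only at hiff
    split_ifs with h3 h4 h4
    · rfl
    · exact absurd (hiff.mp h3) h4
    · exact absurd (hiff.mpr h4) h3
    · rfl
theorem stmt5 (n : ℕ) (hn : 3 ≤ n) :
    ∃ f : SP n →g S 0 (n-1) 2, ∀ x : Equiv.Perm (Fin n), (f x).1 = tauW n x := by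
  refine ⟨⟨fun x => ⟨tauW n x, my_tauW_AWord hn x⟩, ?_⟩, fun x => rfl⟩
  intro u v huv
  obtain ⟨hne, hp⟩ := huv
  constructor
  · intro heq
    have heq' : tauW n u = tauW n v := congrArg Subtype.val heq
    rcases hp with hp | hp
    · exact hne (my_key hn u v hp heq')
    · exact hne (my_key hn v u hp heq'.symm).symm
  · rcases hp with hp | hp
    · exact Or.inl (my_dbAdj hn u v hp)
    · exact Or.inr (my_dbAdj hn v u hp)
end
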